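/- Let $Y_{1,n},\ldots,Y_{n,n}$ be independent random variables with $Y_{i,n}\sim Ber(p_{i,n})$, let $Z_n=\sum_{i=1}^n Y_{i,n}$, and set $\lambda=\sum_{i=1}^n p_{i,n}>0$. Then $d_{TV}(Z_n,\mathcal{P}_\lambda) \le \frac{\sum_{i=1}^n p_{i,n}^2}{\max(1,\lambda)}$. -/

import Mathlib

open MeasureTheory Filter Real

/-- Total variation distance between two measures on ℕ. -/
noncomputable def dTV (P Q : Measure ℕ) : ℝ :=
  ⨆ A : Set ℕ, |(P A).toReal - (Q A).toReal|

/-- The Poisson distribution with parameter `lam` as a measure on ℕ. -/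
noncomputable def poissonMeasure (lam : ℝ) : Measure ℕ :=
  Measure.sum (fun k : ℕ =>
    ENNReal.ofReal (Real.exp (-lam) * lam ^ k / (Nat.factorial k)) • Measure.dirac k)

/-- `Y` has the Bernoulli distribution with parameter `p` (as a ℕ-valued rv). -/
def HasLawBernoulli {Ω : Type*} [MeasurableSpace Ω] (μ : Measure Ω) (Y : Ω → ℕ) (p : ℝ) : Prop :=
  ∀ k : ℕ, μ {ω | Y ω = k} =
    if k = 0 then ENNReal.ofReal (1 - p) else if k = 1 then ENNReal.ofReal p else 0

namespace BH
noncomputable def pois (lam : ℝ) (k : ℕ) : ℝ := Real.exp (-lam) * lam ^ k / (Nat.factorial k)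

lemma pois_nonneg {lam : ℝ} (hl : 0 < lam) (k : ℕ) : 0 ≤ pois lam k := by
  unfold pois; positivity

lemma summable_pois (lam : ℝ) : Summable (pois lam) := by
  have := (Real.summable_pow_div_factorial lam).mul_left (Real.exp (-lam))
  unfold pois; simpa [mul_div_assoc] using this

lemma tsum_pois (lam : ℝ) : ∑' k, pois lam k = 1 := by
  have h : ∑' k : ℕ, lam ^ k / (Nat.factorial k) = Real.exp lam := by
    rw [Real.exp_eq_exp_ℝ, NormedSpace.exp_eq_tsum_div]
  calc ∑' k, pois lam k = Real.exp (-lam) * ∑' k : ℕ, lam ^ k / (Nat.factorial k) := by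
        rw [← tsum_mul_left]; unfold pois; simp [mul_div_assoc]
    _ = 1 := by rw [h, ← Real.exp_add]; simp

lemma pois_succ (lam : ℝ) (k : ℕ) : lam * pois lam k = (k + 1) * pois lam (k + 1) := by
  have : (Nat.factorial (k+1) : ℝ) = (k+1) * Nat.factorial k := by
    push_cast [Nat.factorial_succ]; ring
  unfold pois; rw [this, pow_succ]; field_simp

lemma fac_exp_pois (lam : ℝ) (k : ℕ) :
    (Nat.factorial k : ℝ) * Real.exp lam * pois lam k = lam ^ k := by
  have h2 : (Nat.factorial k : ℝ) ≠ 0 := by positivity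
  have he : Real.exp lam * Real.exp (-lam) = 1 := by rw [← Real.exp_add]; simp
  unfold pois
  field_simp
  linear_combination lam ^ k * he

noncomputable def psum (lam : ℝ) (A : Set ℕ) : ℝ := ∑' k, A.indicator (pois lam) k

noncomputable def pcum (lam : ℝ) (A : Set ℕ) (k : ℕ) : ℝ :=
  ∑ m ∈ Finset.range k, A.indicator (pois lam) m

lemma summable_ind {lam : ℝ} (A : Set ℕ) : Summable (A.indicator (pois lam)) :=
  (summable_pois lam).indicator A

lemma ind_nonneg {lam : ℝ} (hl : 0 < lam) (A : Set ℕ) (k : ℕ) : 0 ≤ A.indicator (pois lam) k :=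
  Set.indicator_nonneg (fun k _ => pois_nonneg hl k) k

lemma psum_nonneg {lam : ℝ} (hl : 0 < lam) (A : Set ℕ) : 0 ≤ psum lam A :=
  tsum_nonneg (ind_nonneg hl A)

lemma psum_univ {lam : ℝ} : psum lam Set.univ = 1 := by
  unfold psum; simpa using tsum_pois lam

lemma psum_le_one {lam : ℝ} (hl : 0 < lam) (A : Set ℕ) : psum lam A ≤ 1 := by
  rw [← psum_univ (lam := lam)]
  exact Summable.tsum_le_tsum (fun k => by
      by_cases h : k ∈ A <;> simp [Set.indicator_apply, h, pois_nonneg hl])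
    (summable_ind A) (summable_ind Set.univ)

lemma pcum_nonneg {lam : ℝ} (hl : 0 < lam) (A : Set ℕ) (k : ℕ) : 0 ≤ pcum lam A k :=
  Finset.sum_nonneg fun m _ => ind_nonneg hl A m

lemma pcum_le_psum {lam : ℝ} (hl : 0 < lam) (A : Set ℕ) (k : ℕ) :
    pcum lam A k ≤ psum lam A :=
  Summable.sum_le_tsum _ (fun m _ => ind_nonneg hl A m) (summable_ind A)

lemma pcum_le_one {lam : ℝ} (hl : 0 < lam) (A : Set ℕ) (k : ℕ) : pcum lam A k ≤ 1 :=
  (pcum_le_psum hl A k).trans (psum_le_one hl A)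

lemma pcum_univ_eq {lam : ℝ} (k : ℕ) :
    pcum lam Set.univ k = ∑ m ∈ Finset.range k, pois lam m := by
  unfold pcum; simp

lemma pcum_univ_tail {lam : ℝ} (k : ℕ) :
    1 - pcum lam Set.univ k = ∑' r, pois lam (r + k) := by
  have h := Summable.sum_add_tsum_nat_add (f := pois lam) k (summable_pois lam)
  rw [tsum_pois] at h
  rw [pcum_univ_eq]
  linarith

/-- Stein solution. -/
noncomputable def steinF (lam : ℝ) (A : Set ℕ) : ℕ → ℝ
  | 0 => 0
  | (k+1) => (Nat.factorial k * Real.exp lam / lam ^ (k+1)) *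
      (pcum lam A (k+1) - psum lam A * pcum lam Set.univ (k+1))

lemma ind_pois_eq (lam : ℝ) (A : Set ℕ) (k : ℕ) :
    A.indicator (pois lam) k = pois lam k * A.indicator (fun _ => (1:ℝ)) k := by
  by_cases h : k ∈ A <;> simp [Set.indicator_apply, h]

lemma stein_identity {lam : ℝ} (hl : 0 < lam) (A : Set ℕ) (k : ℕ) :
    lam * steinF lam A (k+1) - k * steinF lam A k
      = A.indicator (fun _ => (1:ℝ)) k - psum lam A := by
  have hln : lam ≠ 0 := hl.ne'
  cases k with
  | zero =>
      simp only [steinF, Nat.cast_zero, zero_mul, sub_zero]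
      have h0 : pcum lam A 1 = pois lam 0 * A.indicator (fun _ => (1:ℝ)) 0 := by
        unfold pcum; simp [ind_pois_eq]
      have h1 : pcum lam Set.univ 1 = pois lam 0 := by unfold pcum; simp
      have hfp := fac_exp_pois lam 0
      simp only [Nat.factorial_zero, Nat.cast_one, one_mul, pow_zero] at hfp
      rw [h0, h1, pow_one]
      set ia := A.indicator (fun _ => (1:ℝ)) 0
      set T := psum lam A
      field_simp
      linear_combination (ia - T) * hfp
  | succ m =>
      simp only [steinF]
      have hfac : (Nat.factorial (m+1) : ℝ) = (m+1) * Nat.factorial m := by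
        push_cast [Nat.factorial_succ]; ring
      have hcA : pcum lam A (m+2) = pcum lam A (m+1)
          + pois lam (m+1) * A.indicator (fun _ => (1:ℝ)) (m+1) := by
        unfold pcum; rw [Finset.sum_range_succ, ind_pois_eq]
      have hcU : pcum lam Set.univ (m+2) = pcum lam Set.univ (m+1) + pois lam (m+1) := by
        unfold pcum; rw [Finset.sum_range_succ]; simp
      have hfp := fac_exp_pois lam (m+1)
      have hpow : lam ^ (m+2) = lam ^ (m+1) * lam := pow_succ lam (m+1)
      rw [hcA, hcU, hfac, hpow]
      set ia := A.indicator (fun _ => (1:ℝ)) (m+1)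
      set T := psum lam A
      set CA := pcum lam A (m+1)
      set CU := pcum lam Set.univ (m+1)
      set pp := pois lam (m+1) with hpp
      have hlp : lam ^ (m+1) ≠ 0 := pow_ne_zero _ hln
      field_simp
      linear_combination (ia - T) * hfp - (ia - T) * Real.exp lam * pp * hfac - (Nat.factorial m : ℝ) * Real.exp lam * (CA - T * CU) * (Nat.cast_succ (R := ℝ) m)
end BH

namespace BH
variable {lam : ℝ}

lemma summable_tail (lam : ℝ) (k : ℕ) : Summable (fun r => pois lam (r + k)) :=
  (summable_nat_add_iff k).2 (summable_pois lam)

lemma key1 (hl : 0 < lam) (m : ℕ) :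
    (m + 1 : ℝ) * (1 - pcum lam Set.univ (m+2)) ≤ lam * (1 - pcum lam Set.univ (m+1)) := by
  rw [pcum_univ_tail, pcum_univ_tail, ← tsum_mul_left, ← tsum_mul_left]
  have hrw : ∀ r : ℕ, lam * pois lam (r + (m+1)) = ((r:ℝ) + m + 2) * pois lam (r + (m+2)) := by
    intro r
    have := pois_succ lam (r + (m+1))
    have he : r + (m+1) + 1 = r + (m+2) := by omega
    rw [he] at this
    rw [this]; push_cast; ring_nf
  rw [tsum_congr hrw]
  refine Summable.tsum_le_tsum (fun r => ?_) ?_ ?_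
  · have := pois_nonneg hl (r + (m+2))
    nlinarith [this]
  · exact (summable_tail lam (m+2)).mul_left _
  · have : Summable (fun r => lam * pois lam (r + (m+1))) := (summable_tail lam (m+1)).mul_left _
    exact this.congr hrw

lemma key2 (hl : 0 < lam) (m : ℕ) :
    lam * pcum lam Set.univ (m+1) ≤ (m + 1 : ℝ) * pcum lam Set.univ (m+2) := by
  rw [pcum_univ_eq, pcum_univ_eq, Finset.mul_sum]
  have h1 : ∀ r ∈ Finset.range (m+1), lam * pois lam r = ((r:ℝ)+1) * pois lam (r+1) :=
    fun r _ => pois_succ lam r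
  rw [Finset.sum_congr rfl h1]
  have h2 : ∑ r ∈ Finset.range (m+1), ((r:ℝ)+1) * pois lam (r+1)
      ≤ ∑ r ∈ Finset.range (m+1), (m+1 : ℝ) * pois lam (r+1) := by
    refine Finset.sum_le_sum (fun r hr => ?_)
    have hrm : (r:ℝ) + 1 ≤ (m:ℝ) + 1 := by
      have h := Nat.lt_succ_iff.mp (Finset.mem_range.mp hr)
      have : (r:ℝ) ≤ m := by exact_mod_cast h
      linarith
    exact mul_le_mul_of_nonneg_right hrm (pois_nonneg hl (r+1))
  refine h2.trans ?_
  have h3 : ∑ r ∈ Finset.range (m+1), pois lam (r+1) ≤ ∑ s ∈ Finset.range (m+2), pois lam s := by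
    rw [Finset.sum_range_succ' (fun s => pois lam s) (m+1)]
    have := pois_nonneg hl 0
    linarith
  rw [← Finset.mul_sum]
  have hm1 : (0:ℝ) ≤ (m:ℝ) + 1 := by positivity
  exact mul_le_mul_of_nonneg_left h3 hm1

end BH

namespace BH

set_option maxHeartbeats 1000000 in
/-- The crucial Barbour–Eagleson bound on increments of the Stein solution. -/
lemma steinF_diff_bound {lam : ℝ} (hl : 0 < lam) (A : Set ℕ) (m : ℕ) :
    |steinF lam A (m+2) - steinF lam A (m+1)| ≤ min 1 (1/lam) := by
  have hln : lam ≠ 0 := hl.ne'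
  obtain ⟨c1, hc1⟩ : ∃ x : ℝ, x = (Nat.factorial (m+1) : ℝ) * Real.exp lam / lam ^ (m+2) := ⟨_, rfl⟩
  obtain ⟨c0, hc0⟩ : ∃ x : ℝ, x = (Nat.factorial m : ℝ) * Real.exp lam / lam ^ (m+1) := ⟨_, rfl⟩
  obtain ⟨P2, hP2⟩ : ∃ x : ℝ, x = pcum lam Set.univ (m+2) := ⟨_, rfl⟩
  obtain ⟨P1, hP1⟩ : ∃ x : ℝ, x = pcum lam Set.univ (m+1) := ⟨_, rfl⟩
  have hc1pos : 0 < c1 := by rw [hc1]; positivity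
  have hc0pos : 0 < c0 := by rw [hc0]; positivity
  have hfac : (Nat.factorial (m+1) : ℝ) = (m+1) * Nat.factorial m := by
    push_cast [Nat.factorial_succ]; ring
  have hc1c0 : lam * c1 = ((m:ℝ)+1) * c0 := by
    rw [hc1, hc0, hfac]
    field_simp [pow_succ]
    ring
  have hP1nn : 0 ≤ P1 := hP1 ▸ pcum_nonneg hl _ _
  have hP2le : P2 ≤ 1 := hP2 ▸ pcum_le_one hl _ _
  have hP1le : P1 ≤ 1 := hP1 ▸ pcum_le_one hl _ _
  have hP2nn : 0 ≤ P2 := hP2 ▸ pcum_nonneg hl _ _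
  have hk1 := key1 hl m
  have hk2 := key2 hl m
  rw [← hP2, ← hP1] at hk1 hk2
  -- the singleton increments
  set δ : ℕ → ℝ := fun k =>
    c1 * (Set.indicator {j | j ≤ m+1} (pois lam) k - pois lam k * P2)
    - c0 * (Set.indicator {j | j ≤ m} (pois lam) k - pois lam k * P1) with hδ
  have hsum_ind : ∀ j : ℕ, Summable (Set.indicator {i | i ≤ j} (pois lam)) :=
    fun j => (summable_pois lam).indicator _
  have hδsum : Summable δ := by
    refine Summable.sub ?_ ?_
    · exact (((hsum_ind (m+1)).sub ((summable_pois lam).mul_right P2)).mul_left c1)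
    · exact (((hsum_ind m).sub ((summable_pois lam).mul_right P1)).mul_left c0)
  -- tsum of truncated indicator
  have key_tsum : ∀ (j : ℕ) (B : Set ℕ),
      ∑' k, Set.indicator {i | i ≤ j} (B.indicator (pois lam)) k = pcum lam B (j+1) := by
    intro j B
    have hsupp : ∀ k ∉ Finset.range (j+1),
        Set.indicator {i | i ≤ j} (B.indicator (pois lam)) k = 0 := by
      intro k hk
      refine Set.indicator_of_notMem ?_ _
      have := Finset.mem_range.not.mp hk
      simp only [Set.mem_setOf_eq]
      omega
    rw [tsum_eq_sum hsupp]
    unfold pcum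
    refine Finset.sum_congr rfl (fun k hk => ?_)
    have hkj : k ∈ {i : ℕ | i ≤ j} := Nat.lt_succ_iff.mp (Finset.mem_range.mp hk)
    exact Set.indicator_of_mem hkj _
  have key_tsum' : ∀ (j : ℕ),
      ∑' k, Set.indicator {i | i ≤ j} (pois lam) k = pcum lam Set.univ (j+1) := by
    intro j
    have := key_tsum j Set.univ
    simpa using this
  have htsumδ : ∑' k, δ k = 0 := by
    have e1 : ∑' k, c1 * (Set.indicator {j | j ≤ m+1} (pois lam) k - pois lam k * P2)
        = c1 * (P2 - P2) := by
      rw [tsum_mul_left, Summable.tsum_sub (hsum_ind (m+1)) ((summable_pois lam).mul_right P2),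
        tsum_mul_right, tsum_pois, key_tsum', one_mul, ← hP2]
    have e2 : ∑' k, c0 * (Set.indicator {j | j ≤ m} (pois lam) k - pois lam k * P1)
        = c0 * (P1 - P1) := by
      rw [tsum_mul_left, Summable.tsum_sub (hsum_ind m) ((summable_pois lam).mul_right P1),
        tsum_mul_right, tsum_pois, key_tsum', one_mul, ← hP1]
    rw [hδ, Summable.tsum_sub (((hsum_ind (m+1)).sub ((summable_pois lam).mul_right P2)).mul_left c1)
      (((hsum_ind m).sub ((summable_pois lam).mul_right P1)).mul_left c0), e1, e2]
    ring
  -- sign of δ off the diagonal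
  have hδneg : ∀ k, k ≠ m+1 → δ k ≤ 0 := by
    intro k hk
    rcases le_or_gt k m with hkm | hkm
    · have i1 : Set.indicator {j | j ≤ m+1} (pois lam) k = pois lam k :=
        Set.indicator_of_mem (by simp; omega) _
      have i0 : Set.indicator {j | j ≤ m} (pois lam) k = pois lam k :=
        Set.indicator_of_mem (by simpa using hkm) _
      rw [hδ]; dsimp only
      rw [i1, i0]
      have hpk := pois_nonneg hl k
      have hmain : c1 * (1 - P2) ≤ c0 * (1 - P1) := by
        have h := mul_le_mul_of_nonneg_left hk1 (le_of_lt hc0pos)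
        have hl' : lam * (c1 * (1 - P2)) ≤ lam * (c0 * (1 - P1)) := by nlinarith [hc1c0]
        exact le_of_mul_le_mul_left hl' hl
      nlinarith [hmain, hpk]
    · have hk2m : m + 2 ≤ k := by omega
      have i1 : Set.indicator {j | j ≤ m+1} (pois lam) k = 0 :=
        Set.indicator_of_notMem (by simp; omega) _
      have i0 : Set.indicator {j | j ≤ m} (pois lam) k = 0 :=
        Set.indicator_of_notMem (by simp; omega) _
      rw [hδ]; dsimp only
      rw [i1, i0]
      have hpk := pois_nonneg hl k
      have hmain : c0 * P1 ≤ c1 * P2 := by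
        have h := mul_le_mul_of_nonneg_left hk2 (le_of_lt hc1pos)
        have hl' : lam * (c0 * P1) ≤ lam * (c1 * P2) := by nlinarith [hc1c0]
        exact le_of_mul_le_mul_left hl' hl
      nlinarith [hmain, hpk]
  -- value at the diagonal
  have hδval : δ (m+1) = (1 - P2) / lam + P1 / ((m:ℝ)+1) := by
    have i1 : Set.indicator {j | j ≤ m+1} (pois lam) (m+1) = pois lam (m+1) :=
      Set.indicator_of_mem (by simp) _
    have i0 : Set.indicator {j | j ≤ m} (pois lam) (m+1) = 0 :=
      Set.indicator_of_notMem (by simp) _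
    have hfp := fac_exp_pois lam (m+1)
    have e1 : pois lam (m+1) * c1 = 1 / lam := by
      rw [hc1]
      have hpow : (0:ℝ) < lam ^ (m+2) := by positivity
      field_simp
      linear_combination lam * hfp
    have e2 : pois lam (m+1) * c0 = 1 / ((m:ℝ)+1) := by
      rw [hc0]
      have hm1 : (0:ℝ) < (m:ℝ) + 1 := by positivity
      field_simp
      linear_combination hfp - Real.exp lam * pois lam (m+1) * hfac
    rw [hδ]; dsimp only
    rw [i1, i0]
    have : c1 * (pois lam (m+1) - pois lam (m+1) * P2) - c0 * (0 - pois lam (m+1) * P1)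
        = (pois lam (m+1) * c1) * (1 - P2) + (pois lam (m+1) * c0) * P1 := by ring
    rw [this, e1, e2]
    ring
  have hδdiag_nn : 0 ≤ δ (m+1) := by
    rw [hδval]
    have h1 : 0 ≤ (1 - P2) / lam := div_nonneg (by linarith) hl.le
    have h2 : 0 ≤ P1 / ((m:ℝ)+1) := div_nonneg hP1nn (by positivity)
    linarith
  have hδdiag_le : δ (m+1) ≤ min 1 (1/lam) := by
    rw [hδval]
    have hm1 : (0:ℝ) < (m:ℝ) + 1 := by positivity
    refine le_min ?_ ?_
    · -- ≤ 1
      have h1 : 1 - P2 ≤ lam * (1 - P1) := by nlinarith [hk1]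
      have h2 : (1 - P2)/lam ≤ 1 - P1 := by
        rw [div_le_iff₀ hl]; nlinarith [h1]
      have h3 : P1 / ((m:ℝ)+1) ≤ P1 := by
        rw [div_le_iff₀ hm1]; nlinarith [mul_nonneg hP1nn (by positivity : (0:ℝ) ≤ (m:ℝ))]
      linarith
    · -- ≤ 1/lam
      have h1 : P1 / ((m:ℝ)+1) ≤ P2 / lam := by
        rw [div_le_div_iff₀ hm1 hl]; nlinarith [hk2]
      have h2 : (1 - P2)/lam + P2/lam = 1/lam := by field_simp; ring
      linarith
  -- decomposition of the increment as a tsum over A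
  have s2 : steinF lam A (m+2) = c1 * (pcum lam A (m+2) - psum lam A * P2) := by
    rw [hc1, hP2]; rfl
  have s1 : steinF lam A (m+1) = c0 * (pcum lam A (m+1) - psum lam A * P1) := by
    rw [hc0, hP1]; rfl
  have hAδ : ∀ k, A.indicator δ k =
      c1 * (Set.indicator {j | j ≤ m+1} (A.indicator (pois lam)) k
        - A.indicator (pois lam) k * P2)
      - c0 * (Set.indicator {j | j ≤ m} (A.indicator (pois lam)) k
        - A.indicator (pois lam) k * P1) := by
    intro k
    by_cases hk : k ∈ A <;> by_cases h1 : k ≤ m+1 <;> by_cases h0 : k ≤ m <;>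
      simp [hδ, Set.indicator_apply, hk, h1, h0, Set.mem_setOf_eq] <;> ring
  have sA1 : Summable (fun k => Set.indicator {j | j ≤ m+1} (A.indicator (pois lam)) k
      - A.indicator (pois lam) k * P2) :=
    ((summable_ind A).indicator _).sub ((summable_ind A).mul_right P2)
  have sA0 : Summable (fun k => Set.indicator {j | j ≤ m} (A.indicator (pois lam)) k
      - A.indicator (pois lam) k * P1) :=
    ((summable_ind A).indicator _).sub ((summable_ind A).mul_right P1)
  have hΔ : steinF lam A (m+2) - steinF lam A (m+1) = ∑' k, A.indicator δ k := by
    rw [tsum_congr hAδ]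
    rw [Summable.tsum_sub (sA1.mul_left c1) (sA0.mul_left c0), tsum_mul_left, tsum_mul_left,
      Summable.tsum_sub ((summable_ind A).indicator _) ((summable_ind A).mul_right P2),
      Summable.tsum_sub ((summable_ind A).indicator _) ((summable_ind A).mul_right P1),
      tsum_mul_right, tsum_mul_right, key_tsum (m+1) A, key_tsum m A]
    rw [s2, s1]
    unfold psum
    ring
  have hsumAδ : Summable (A.indicator δ) := hδsum.indicator A
  have hsingle : Summable (({m+1} : Set ℕ).indicator δ) := hδsum.indicator _
  have hsing_val : ∑' k, ({m+1} : Set ℕ).indicator δ k = δ (m+1) := by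
    rw [tsum_eq_single (m+1) (fun b hb => Set.indicator_of_notMem (by simpa using hb) _)]
    exact Set.indicator_of_mem rfl _
  have hup : ∑' k, A.indicator δ k ≤ δ (m+1) := by
    rw [← hsing_val]
    refine Summable.tsum_le_tsum (fun k => ?_) hsumAδ hsingle
    by_cases hk : k = m+1
    · subst hk
      by_cases hA : m+1 ∈ A <;>
        simp [Set.indicator_apply, hA, hδdiag_nn]
    · have hneg := hδneg k hk
      by_cases hA : k ∈ A <;> simp [Set.indicator_apply, hA, hk] <;> linarith
  have hlow : -δ (m+1) ≤ ∑' k, A.indicator δ k := by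
    have h1 : ∑' k, (δ k - ({m+1}:Set ℕ).indicator δ k) ≤ ∑' k, A.indicator δ k := by
      refine Summable.tsum_le_tsum (fun k => ?_) (hδsum.sub hsingle) hsumAδ
      by_cases hk : k = m+1
      · subst hk
        by_cases hA : m+1 ∈ A <;>
          simp [Set.indicator_apply, hA, hδdiag_nn]
      · have hneg := hδneg k hk
        by_cases hA : k ∈ A <;> simp [Set.indicator_apply, hA, hk] <;> linarith
    rw [Summable.tsum_sub hδsum hsingle, htsumδ, hsing_val] at h1
    linarith
  rw [hΔ]
  exact (abs_le.mpr ⟨by linarith, hup⟩).trans hδdiag_le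

end BH

namespace BH

lemma min_eq_inv_max {lam : ℝ} (hl : 0 < lam) : min 1 (1/lam) = 1 / max 1 lam := by
  rcases le_total 1 lam with h | h
  · rw [max_eq_right h, min_eq_right ((div_le_one hl).mpr h)]
  · rw [max_eq_left h, min_eq_left]
    · norm_num
    · rw [le_div_iff₀ hl]; linarith

end BH

open BH in
lemma poissonMeasure_toReal (lam : ℝ) (hl : 0 < lam) (A : Set ℕ) :
    ((poissonMeasure lam) A).toReal = psum lam A := by
  have hA : MeasurableSet A := trivial
  have h1 : (poissonMeasure lam) A
      = ∑' k, ENNReal.ofReal (pois lam k) * (Measure.dirac k) A := by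
    rw [poissonMeasure, Measure.sum_apply _ hA]
    rfl
  have h2 : ∀ k : ℕ, ENNReal.ofReal (pois lam k) * (Measure.dirac k) A
      = ENNReal.ofReal (A.indicator (pois lam) k) := by
    intro k
    rw [Measure.dirac_apply' _ hA]
    by_cases hk : k ∈ A <;> simp [Set.indicator_apply, hk]
  rw [h1, tsum_congr h2, ← ENNReal.ofReal_tsum_of_nonneg (ind_nonneg hl A) (summable_ind A)]
  exact ENNReal.toReal_ofReal (psum_nonneg hl A)

open BH ProbabilityTheory

set_option maxHeartbeats 1000000 in
/-- Poisson approximation bound for sums of independent Bernoulli random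
variables with the matched mean λ = ∑ pᵢ (the Barbour–Hall bound). -/
theorem poisson_approx_bernoulli_matched
    {Ω : Type*} [MeasurableSpace Ω] (μ : Measure Ω) [IsProbabilityMeasure μ]
    (n : ℕ) (Y : Fin n → Ω → ℕ) (hmeas : ∀ i, Measurable (Y i))
    (hindep : ProbabilityTheory.iIndepFun Y μ)
    (p : Fin n → ℝ) (hp0 : ∀ i, 0 ≤ p i) (hp1 : ∀ i, p i ≤ 1)
    (hlaw : ∀ i, HasLawBernoulli μ (Y i) (p i))
    (lam : ℝ) (hlam : lam = ∑ i, p i) (hlam_pos : 0 < lam) :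
    dTV (Measure.map (fun ω => ∑ i, Y i ω) μ) (poissonMeasure lam) ≤
      (∑ i, p i ^ 2) / max 1 lam := by
  classical
  set Z : Ω → ℕ := fun ω => ∑ i, Y i ω with hZ
  have hZmeas : Measurable Z := Finset.measurable_sum _ (fun i _ => hmeas i)
  -- a.e. the Yᵢ are ≤ 1
  have hYae : ∀ i, ∀ᵐ ω ∂μ, Y i ω ≤ 1 := by
    intro i
    have h2 : μ {ω | 2 ≤ Y i ω} = 0 := by
      have hs : {ω | 2 ≤ Y i ω} = ⋃ k : ℕ, {ω | Y i ω = k + 2} := by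
        ext ω; simp only [Set.mem_setOf_eq, Set.mem_iUnion]
        constructor
        · intro h; exact ⟨Y i ω - 2, by omega⟩
        · rintro ⟨k, hk⟩; omega
      rw [hs]
      refine measure_iUnion_null (fun k => ?_)
      have := hlaw i (k+2)
      simpa using this
    rw [ae_iff]
    convert h2 using 2
    ext ω; simp only [Set.mem_setOf_eq, not_le]
    omega
  have hZae : ∀ᵐ ω ∂μ, Z ω ≤ n := by
    filter_upwards [ae_all_iff.2 hYae] with ω hω
    calc Z ω = ∑ i, Y i ω := rfl
      _ ≤ ∑ _i : Fin n, 1 := Finset.sum_le_sum (fun i _ => hω i)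
      _ = n := by simp
  -- integrability helper
  have int_aux : ∀ (f : Ω → ℝ), AEStronglyMeasurable f μ → (∃ C : ℝ, ∀ᵐ ω ∂μ, |f ω| ≤ C) →
      Integrable f μ := by
    rintro f hm ⟨C, hC⟩
    refine (integrable_const C).mono' hm ?_
    filter_upwards [hC] with ω h
    simpa [Real.norm_eq_abs] using h
  have hbound : ∀ (g : ℕ → ℝ) (X : Ω → ℕ) (M : ℕ), Measurable X → (∀ᵐ ω ∂μ, X ω ≤ M) →
      Integrable (fun ω => g (X ω)) μ := by
    intro g X M hX hb
    refine int_aux _ ((measurable_from_top.comp hX).aestronglyMeasurable)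
      ⟨∑ k ∈ Finset.range (M+1), |g k|, ?_⟩
    filter_upwards [hb] with ω h
    exact Finset.single_le_sum (f := fun k => |g k|) (fun k _ => abs_nonneg _)
      (Finset.mem_range.mpr (by omega))
  -- the probability of {Yᵢ = 1}
  have hY1 : ∀ i, (μ ((Y i) ⁻¹' {1})).toReal = p i := by
    intro i
    have h := hlaw i 1
    have hpre : (Y i) ⁻¹' {1} = {ω | Y i ω = 1} := by ext ω; simp
    rw [hpre, h]
    simp [ENNReal.toReal_ofReal (hp0 i)]
  -- main per-set bound
  have main : ∀ A : Set ℕ, |(μ (Z ⁻¹' A)).toReal - psum lam A|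
      ≤ (∑ i, p i ^ 2) * min 1 (1/lam) := by
    intro A
    set g : ℕ → ℝ := steinF lam A with hg
    set T : ℝ := psum lam A with hT
    set W : Fin n → Ω → ℕ := fun i ω => ∑ j ∈ Finset.univ.erase i, Y j ω with hW
    have hWmeas : ∀ i, Measurable (W i) := fun i => Finset.measurable_sum _ (fun j _ => hmeas j)
    have hZW : ∀ i ω, Z ω = W i ω + Y i ω := by
      intro i ω
      rw [hZ, hW]
      exact (Finset.sum_erase_add Finset.univ _ (Finset.mem_univ i)).symm
    have hWae : ∀ i, ∀ᵐ ω ∂μ, W i ω ≤ n := by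
      intro i
      filter_upwards [hZae] with ω h
      have := hZW i ω
      omega
    have hindepi : ∀ i, IndepFun (W i) (Y i) μ := by
      intro i
      have h := hindep.indepFun_finsetSum_of_notMem hmeas (Finset.notMem_erase i Finset.univ)
      have he : (∑ j ∈ Finset.univ.erase i, Y j) = W i := by
        funext ω; rw [hW]; simp [Finset.sum_apply]
      rwa [he] at h
    -- product rule
    have hprod : ∀ (i : Fin n) (ψ : ℕ → ℝ),
        ∫ ω, (if Y i ω = 1 then (1:ℝ) else 0) * ψ (W i ω) ∂μ
          = p i * ∫ ω, ψ (W i ω) ∂μ := by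
      intro i ψ
      have hInd : IndepFun (fun ω => (if Y i ω = 1 then (1:ℝ) else 0))
          (fun ω => ψ (W i ω)) μ :=
        (hindepi i).symm.comp (measurable_from_top (f := fun x : ℕ => if x = 1 then (1:ℝ) else 0))
          (measurable_from_top (f := ψ))
      have int1 : Integrable (fun ω => (if Y i ω = 1 then (1:ℝ) else 0)) μ :=
        hbound (fun x => if x = 1 then 1 else 0) (Y i) 1 (hmeas i) (hYae i)
      have int2 : Integrable (fun ω => ψ (W i ω)) μ := hbound ψ (W i) n (hWmeas i) (hWae i)
      rw [show ∫ ω, (if Y i ω = 1 then (1:ℝ) else 0) * ψ (W i ω) ∂μ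
          = (∫ ω, (if Y i ω = 1 then (1:ℝ) else 0) ∂μ) * ∫ ω, ψ (W i ω) ∂μ from
        hInd.integral_fun_mul_eq_mul_integral int1.aestronglyMeasurable int2.aestronglyMeasurable]
      congr 1
      have hind : (fun ω => (if Y i ω = 1 then (1:ℝ) else 0))
          = Set.indicator ((Y i) ⁻¹' {1}) (fun _ => (1:ℝ)) := by
        funext ω; by_cases h : Y i ω = 1 <;> simp [Set.indicator_apply, h]
      rw [hind, integral_indicator_const (1:ℝ) ((hmeas i) (measurableSet_singleton 1))]
      simp [measureReal_def, hY1 i]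
    -- integrabilities
    have intgZ1 : Integrable (fun ω => g (Z ω + 1)) μ :=
      hbound (fun x => g (x+1)) Z n hZmeas hZae
    have intgW1 : ∀ i, Integrable (fun ω => g (W i ω + 1)) μ :=
      fun i => hbound (fun x => g (x+1)) (W i) n (hWmeas i) (hWae i)
    have intYgZ : ∀ i, Integrable (fun ω => (Y i ω : ℝ) * g (Z ω)) μ := by
      intro i
      refine int_aux _ ?_ ⟨∑ k ∈ Finset.range (n+1), |g k|, ?_⟩
      · have m1 : Measurable (fun ω => (Y i ω : ℝ)) :=
          Measurable.comp (measurable_from_top (f := fun k : ℕ => (k:ℝ))) (hmeas i)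
        have m2 : Measurable (fun ω => g (Z ω)) :=
          Measurable.comp (measurable_from_top (f := g)) hZmeas
        exact (m1.mul m2).aestronglyMeasurable
      · filter_upwards [hYae i, hZae] with ω h1 h2
        have hb : |g (Z ω)| ≤ ∑ k ∈ Finset.range (n+1), |g k| :=
          Finset.single_le_sum (f := fun k => |g k|) (fun k _ => abs_nonneg _)
            (Finset.mem_range.mpr (by omega))
        have habs : |(Y i ω : ℝ) * g (Z ω)| = (Y i ω : ℝ) * |g (Z ω)| := by
          rw [abs_mul, abs_of_nonneg (by positivity)]
        rw [habs]
        rcases Nat.le_one_iff_eq_zero_or_eq_one.mp h1 with h | h <;> rw [h] <;> simp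
        · positivity
        · exact hb
    -- E[Yᵢ g(Z)] = pᵢ E[g(Wᵢ+1)]
    have hYg : ∀ i, ∫ ω, (Y i ω : ℝ) * g (Z ω) ∂μ = p i * ∫ ω, g (W i ω + 1) ∂μ := by
      intro i
      have hae : (fun ω => (Y i ω : ℝ) * g (Z ω))
          =ᵐ[μ] (fun ω => (if Y i ω = 1 then (1:ℝ) else 0) * g (W i ω + 1)) := by
        filter_upwards [hYae i] with ω h1
        rcases Nat.le_one_iff_eq_zero_or_eq_one.mp h1 with h | h <;>
          simp [h, hZW i ω]
      rw [integral_congr_ae hae, hprod i (fun x => g (x+1))]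
    -- E[g(Z+1)] - E[g(Wᵢ+1)] = pᵢ E[g(Wᵢ+2) - g(Wᵢ+1)]
    have hdiff : ∀ i, ∫ ω, g (Z ω + 1) ∂μ - ∫ ω, g (W i ω + 1) ∂μ
        = p i * ∫ ω, (g (W i ω + 2) - g (W i ω + 1)) ∂μ := by
      intro i
      rw [← integral_sub intgZ1 (intgW1 i)]
      have hae : (fun ω => g (Z ω + 1) - g (W i ω + 1))
          =ᵐ[μ] (fun ω => (if Y i ω = 1 then (1:ℝ) else 0)
            * ((fun x => g (x + 2) - g (x + 1)) (W i ω))) := by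
        filter_upwards [hYae i] with ω h1
        rcases Nat.le_one_iff_eq_zero_or_eq_one.mp h1 with h | h <;>
          simp [h, hZW i ω]
      rw [integral_congr_ae hae, hprod i (fun x => g (x + 2) - g (x + 1))]
    -- Stein expectation identity
    have hsteinZ : ∀ ω, lam * g (Z ω + 1) - (Z ω : ℝ) * g (Z ω)
        = Set.indicator (Z ⁻¹' A) (fun _ => (1:ℝ)) ω - T := by
      intro ω
      have h0 := stein_identity hlam_pos A (Z ω)
      have hind : A.indicator (fun _ => (1:ℝ)) (Z ω)
          = (Z ⁻¹' A).indicator (fun _ => (1:ℝ)) ω := by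
        by_cases h : Z ω ∈ A <;> simp [Set.indicator_apply, h]
      rw [hg, hT, h0, hind]
    have intZg : Integrable (fun ω => (Z ω : ℝ) * g (Z ω)) μ := by
      refine int_aux _ ?_ ⟨(n:ℝ) * ∑ k ∈ Finset.range (n+1), |g k|, ?_⟩
      · have m1 : Measurable (fun ω => (Z ω : ℝ)) :=
          Measurable.comp (measurable_from_top (f := fun k : ℕ => (k:ℝ))) hZmeas
        have m2 : Measurable (fun ω => g (Z ω)) :=
          Measurable.comp (measurable_from_top (f := g)) hZmeas
        exact (m1.mul m2).aestronglyMeasurable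
      · filter_upwards [hZae] with ω h2
        have hb : |g (Z ω)| ≤ ∑ k ∈ Finset.range (n+1), |g k| :=
          Finset.single_le_sum (f := fun k => |g k|) (fun k _ => abs_nonneg _)
            (Finset.mem_range.mpr (by omega))
        rw [abs_mul, abs_of_nonneg (by positivity : (0:ℝ) ≤ (Z ω : ℝ))]
        have h2' : (Z ω : ℝ) ≤ n := by exact_mod_cast h2
        have habs : (0:ℝ) ≤ |g (Z ω)| := abs_nonneg _
        nlinarith [hb]
    have hexp : (μ (Z ⁻¹' A)).toReal - T
        = lam * ∫ ω, g (Z ω + 1) ∂μ - ∫ ω, (Z ω : ℝ) * g (Z ω) ∂μ := by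
      have h1 : ∫ ω, (lam * g (Z ω + 1) - (Z ω : ℝ) * g (Z ω)) ∂μ
          = lam * ∫ ω, g (Z ω + 1) ∂μ - ∫ ω, (Z ω : ℝ) * g (Z ω) ∂μ := by
        rw [integral_sub (intgZ1.const_mul lam) intZg, integral_const_mul]
      have h2 : ∫ ω, (lam * g (Z ω + 1) - (Z ω : ℝ) * g (Z ω)) ∂μ
          = (μ (Z ⁻¹' A)).toReal - T := by
        rw [integral_congr_ae (Filter.Eventually.of_forall hsteinZ)]
        rw [integral_sub ?_ (integrable_const T)]
        · rw [integral_indicator_const (1:ℝ) (hZmeas trivial), integral_const]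
          simp [measureReal_def]
        · refine int_aux _ ?_ ⟨1, ?_⟩
          · exact (measurable_const.indicator (hZmeas trivial)).aestronglyMeasurable
          · refine Filter.Eventually.of_forall (fun ω => ?_)
            by_cases h : ω ∈ Z ⁻¹' A <;> simp [Set.indicator_apply, h]
      rw [← h2, h1]
    -- decompose E[Z g(Z)]
    have hZgZ : ∫ ω, (Z ω : ℝ) * g (Z ω) ∂μ = ∑ i, p i * ∫ ω, g (W i ω + 1) ∂μ := by
      have h1 : (fun ω => (Z ω : ℝ) * g (Z ω))
          = (fun ω => ∑ i, (Y i ω : ℝ) * g (Z ω)) := by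
        funext ω
        rw [hZ]
        push_cast
        rw [Finset.sum_mul]
      rw [h1, integral_finset_sum _ (fun i _ => intYgZ i)]
      exact Finset.sum_congr rfl (fun i _ => hYg i)
    -- combine
    have hcomb : (μ (Z ⁻¹' A)).toReal - T
        = ∑ i, p i * (p i * ∫ ω, (g (W i ω + 2) - g (W i ω + 1)) ∂μ) := by
      rw [hexp, hZgZ, hlam, Finset.sum_mul]
      rw [← Finset.sum_sub_distrib]
      exact Finset.sum_congr rfl (fun i _ => by rw [← mul_sub, hdiff i])
    rw [hcomb]
    -- bound each term
    have hterm : ∀ i : Fin n, |p i * (p i * ∫ ω, (g (W i ω + 2) - g (W i ω + 1)) ∂μ)|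
        ≤ p i ^ 2 * min 1 (1/lam) := by
      intro i
      have hb : |∫ ω, (g (W i ω + 2) - g (W i ω + 1)) ∂μ| ≤ min 1 (1/lam) := by
        have := norm_integral_le_of_norm_le_const (μ := μ)
          (f := fun ω => g (W i ω + 2) - g (W i ω + 1)) (C := min 1 (1/lam)) ?_
        · simpa [Real.norm_eq_abs] using this
        · refine Filter.Eventually.of_forall (fun ω => ?_)
          rw [Real.norm_eq_abs]
          exact steinF_diff_bound hlam_pos A (W i ω)
      rw [abs_mul, abs_mul, abs_of_nonneg (hp0 i), ← mul_assoc, ← sq]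
      exact mul_le_mul_of_nonneg_left hb (by positivity)
    calc |∑ i, p i * (p i * ∫ ω, (g (W i ω + 2) - g (W i ω + 1)) ∂μ)|
        ≤ ∑ i, |p i * (p i * ∫ ω, (g (W i ω + 2) - g (W i ω + 1)) ∂μ)| :=
          Finset.abs_sum_le_sum_abs _ _
      _ ≤ ∑ i, p i ^ 2 * min 1 (1/lam) := Finset.sum_le_sum (fun i _ => hterm i)
      _ = (∑ i, p i ^ 2) * min 1 (1/lam) := by rw [Finset.sum_mul]
  -- conclude
  rw [dTV]
  have hrhs : (∑ i, p i ^ 2) / max 1 lam = (∑ i, p i ^ 2) * min 1 (1/lam) := by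
    rw [min_eq_inv_max hlam_pos]
    rw [div_eq_mul_one_div]
  rw [hrhs]
  refine Real.iSup_le (fun A => ?_) ?_
  · rw [Measure.map_apply hZmeas trivial, poissonMeasure_toReal lam hlam_pos A]
    exact main A
  · have : (0:ℝ) ≤ min 1 (1/lam) := by positivity
    positivity
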